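/- Let k_e > 0 and let A : [0,∞) → ℝ^{3×3} be a curve of skew-symmetric matrices. If Z : [0,∞) → ℝ^{3×3} is a differentiable curve of symmetric matrices satisfying Ż(t) = [Z(t), A(t)] − 2k_e·Z(t) for all t ≥ 0, then ‖Z(t)‖ ≤ e^{−2k_e t}·‖Z(0)‖ for all t ≥ 0. -/

import Mathlib

open Matrix

attribute [local instance] Matrix.frobeniusNormedAddCommGroup Matrix.frobeniusNormedSpace

noncomputable section

abbrev Mat3 := Matrix (Fin 3) (Fin 3) ℝ

/-- Frobenius inner product. -/
def finner (A B : Mat3) : ℝ := (Aᵀ * B).trace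

/-- Euclidean norm on ℝ³. -/
def enorm3 (v : Fin 3 → ℝ) : ℝ := Real.sqrt (∑ i, v i ^ 2)

/-- The hat map. -/
def hat (v : Fin 3 → ℝ) : Mat3 :=
  !![0, -v 2, v 1; v 2, 0, -v 0; -v 1, v 0, 0]

/-- The vee map, inverse of the hat map on skew-symmetric matrices. -/
def vee (A : Mat3) : Fin 3 → ℝ := ![A 2 1, A 0 2, A 1 0]

/-- The cross product on ℝ³. -/
def cross (u v : Fin 3 → ℝ) : Fin 3 → ℝ :=
  ![u 1 * v 2 - u 2 * v 1, u 2 * v 0 - u 0 * v 2, u 0 * v 1 - u 1 * v 0]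

/-- Symmetrization operator. -/
def symPart (A : Mat3) : Mat3 := (2⁻¹ : ℝ) • (A + Aᵀ)

/-- Skew-symmetrization operator. -/
def skewPart (A : Mat3) : Mat3 := (2⁻¹ : ℝ) • (A - Aᵀ)

/-- `SO(3)`: rotation matrices. -/
def SO3 : Set Mat3 := {R | Rᵀ * R = 1 ∧ 0 < R.det}

/-- The matrix commutator. -/
def mcomm (A B : Mat3) : Mat3 := A * B - B * A

/-- Entry evaluation as a continuous linear map (frobenius norm). -/
def entryCLM (i j : Fin 3) : Mat3 →L[ℝ] ℝ :=
  LinearMap.toContinuousLinearMap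
    { toFun := fun M => M i j
      map_add' := fun _ _ => rfl
      map_smul' := fun _ _ => rfl }

@[simp] lemma entryCLM_apply (i j : Fin 3) (M : Mat3) : entryCLM i j M = M i j := rfl

/-- Key algebraic identity: `⟨Z, [Z, A]⟩ = 0` for symmetric `Z`. -/
lemma key_inner_comm (Zm Am : Mat3) (hs : Zmᵀ = Zm) :
    ∑ i, ∑ j, Zm i j * mcomm Zm Am i j = 0 := by
  have h : ∀ i j, Zm j i = Zm i j := fun i j =>
    (Matrix.transpose_apply Zm i j).symm.trans (congrFun (congrFun hs i) j)
  have h10 := h 1 0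
  have h20 := h 2 0
  have h21 := h 2 1
  simp only [mcomm, Matrix.sub_apply, Matrix.mul_apply, Fin.sum_univ_three, h10, h20, h21]
  ring

/-- Exponential decay of the symmetric part: if `Z` is symmetric-valued and
`Ż = [Z, A] − 2k_e Z` with `A` skew-symmetric-valued, then
`‖Z(t)‖ ≤ e^{−2k_e t}‖Z(0)‖`. -/
theorem symmetric_part_exp_decay (ke : ℝ) (hke : 0 < ke)
    (A : ℝ → Mat3) (hA : ∀ t, 0 ≤ t → (A t)ᵀ = -(A t))
    (Z : ℝ → Mat3) (hZsym : ∀ t, 0 ≤ t → (Z t)ᵀ = Z t)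
    (hZ : ∀ t, 0 ≤ t → HasDerivAt Z (mcomm (Z t) (A t) - (2 * ke) • Z t) t) :
    ∀ t, 0 ≤ t → ‖Z t‖ ≤ Real.exp (-(2 * ke) * t) * ‖Z 0‖ := by
  set W : ℝ → ℝ := fun s => ∑ i, ∑ j, (Z s i j) ^ 2 with hWdef
  have hWnonneg : ∀ s, 0 ≤ W s := fun s =>
    Finset.sum_nonneg fun i _ => Finset.sum_nonneg fun j _ => sq_nonneg _
  -- derivative of W
  have hWd : ∀ s, 0 ≤ s → HasDerivAt W (-(4 * ke) * W s) s := by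
    intro s hs
    have hZij : ∀ i j : Fin 3, HasDerivAt (fun u => Z u i j)
        ((mcomm (Z s) (A s) - (2 * ke) • Z s) i j) s := fun i j => by
      exact ((entryCLM i j).hasFDerivAt.comp_hasDerivAt s (hZ s hs))
    have hsum : HasDerivAt W
        (∑ i, ∑ j, 2 * Z s i j * ((mcomm (Z s) (A s) - (2 * ke) • Z s) i j)) s := by
      apply HasDerivAt.fun_sum
      intro i _
      apply HasDerivAt.fun_sum
      intro j _
      simpa [mul_comm, mul_assoc] using (hZij i j).fun_pow 2
    convert hsum using 1
    have hkey := key_inner_comm (Z s) (A s) (hZsym s hs)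
    simp only [Fin.sum_univ_three] at hkey ⊢
    simp only [hWdef, Matrix.sub_apply, Matrix.smul_apply, smul_eq_mul, Fin.sum_univ_three]
    linear_combination -2 * hkey
  -- the rescaled function is constant
  have hg : ∀ s, 0 ≤ s → HasDerivAt (fun u => Real.exp (4 * ke * u) * W u) 0 s := by
    intro s hs
    have hlin : HasDerivAt (fun u : ℝ => 4 * ke * u) (4 * ke) s := by
      simpa using (hasDerivAt_id s).const_mul (4 * ke)
    have h1 : HasDerivAt (fun u => Real.exp (4 * ke * u)) (Real.exp (4 * ke * s) * (4 * ke)) s :=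
      hlin.exp
    have h2 := h1.fun_mul (hWd s hs)
    refine h2.congr_deriv ?_
    ring
  intro t ht
  have hcont : ContinuousOn (fun u => Real.exp (4 * ke * u) * W u) (Set.Icc 0 t) :=
    fun s hs => ((hg s hs.1).continuousAt).continuousWithinAt
  have hconst := constant_of_has_deriv_right_zero hcont
    (fun s hs => (hg s hs.1).hasDerivWithinAt) t (Set.right_mem_Icc.2 ht)
  have hW0 : Real.exp (4 * ke * t) * W t = W 0 := by
    simpa using hconst
  have hWt : W t = Real.exp (-(4 * ke) * t) * W 0 := by
    rw [← hW0, ← mul_assoc, ← Real.exp_add]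
    ring_nf
    simp
  -- relate norm and W
  have hnorm : ∀ s, ‖Z s‖ = Real.sqrt (W s) := by
    intro s
    rw [Matrix.frobenius_norm_def, ← Real.sqrt_eq_rpow]
    congr 1
    refine Finset.sum_congr rfl fun i _ => Finset.sum_congr rfl fun j _ => ?_
    rw [Real.rpow_two, Real.norm_eq_abs, sq_abs]
  rw [hnorm, hnorm, hWt]
  have hexp : Real.exp (-(4 * ke) * t) = (Real.exp (-(2 * ke) * t)) ^ 2 := by
    rw [sq, ← Real.exp_add]; ring_nf
  rw [hexp, Real.sqrt_mul (sq_nonneg _), Real.sqrt_sq (Real.exp_pos _).le]
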